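/- Let X be a spiny symmetric set and x ∈ Xₙ. Then x is nondegenerate if and only if the Bousfield–Segal image 𝓑ₙ(x) = (ε₀₁*x, ..., ε₀ₙ*x) consists of n distinct elements of X₁, none of which is an identity (i.e., none is in the image of the degeneracy X₀ → X₁). -/

import Mathlib

open CategoryTheory Opposite

/-- The skeleton of the category of finite nonempty sets: objects are natural
numbers `n`, standing for `[n] = {0, …, n}`, morphisms are all functions. -/
def Ups : Type := ℕ

/-- The natural number underlying an object of `Ups`. -/
def Ups.toNat : Ups → ℕ := fun n => n

/-- The object `[n]` of `Ups`. -/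
def Ups.of : ℕ → Ups := fun n => n

instance : Category Ups where
  Hom n m := Fin (n.toNat + 1) → Fin (m.toNat + 1)
  id _ := _root_.id
  comp f g := g ∘ f

/-- A symmetric set is a presheaf on `Ups`. -/
abbrev SymmSet := Upsᵒᵖ ⥤ Type

/-- The map `ε_{ij} : [1] → [n]` sending `0, 1` to `i, j`. -/
def eps (n : ℕ) (i j : Fin (n + 1)) : Ups.of 1 ⟶ Ups.of n :=
  fun k => if k = 0 then i else j

/-- The set of `n`-simplices of a symmetric set. -/
abbrev simp (X : SymmSet) (n : ℕ) : Type := X.obj (op (Ups.of n))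

/-- The Bousfield–Segal map `𝓑ₙ : Xₙ → X₁ⁿ`, `x ↦ (ε₀₁*x, …, ε₀ₙ*x)`. -/
def BS (X : SymmSet) (n : ℕ) (x : simp X n) : Fin n → simp X 1 :=
  fun k => X.map (eps n 0 k.succ).op x

/-- The Segal map `𝓔ₙ : Xₙ → X₁ⁿ`, `x ↦ (ε₀₁*x, ε₁₂*x, …, ε₍ₙ₋₁₎ₙ*x)`. -/
def ES (X : SymmSet) (n : ℕ) (x : simp X n) : Fin n → simp X 1 :=
  fun k => X.map (eps n k.castSucc k.succ).op x

/-- The canonical map `μ_X` to matrices, `x ↦ (ε_{ij}* x)_{ij}`. -/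
def muMat (X : SymmSet) (n : ℕ) (x : simp X n) :
    Fin (n + 1) → Fin (n + 1) → simp X 1 :=
  fun i j => X.map (eps n i j).op x

/-- A symmetric set is spiny if all Bousfield–Segal maps are injective. -/
def Spiny (X : SymmSet) : Prop := ∀ n, Function.Injective (BS X n)
/-- The matrix symmetric set `Mat(S)`: `n`-simplices are functions `[n]×[n] → S`. -/
def MatS (S : Type) : SymmSet where
  obj k := Fin (k.unop.toNat + 1) → Fin (k.unop.toNat + 1) → S
  map f := TypeCat.ofHom (fun M => fun a b => M (f.unop a) (f.unop b))
  map_id := by intros; rfl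
  map_comp := by intros; rfl

/-- An `n`-simplex is degenerate if it is `ρ* y` for a noninvertible surjection
`ρ : [n] ↠ [m]` and an `m`-simplex `y`. -/
def Degen (X : SymmSet) (n : ℕ) (x : simp X n) : Prop :=
  ∃ (m : ℕ) (ρ : Ups.of n ⟶ Ups.of m), Function.Surjective ρ ∧
    ¬ Function.Bijective ρ ∧ ∃ y : simp X m, x = X.map ρ.op y

/-- The `d`-skeleton of a symmetric set, as a symmetric subset. -/
def skel (X : SymmSet) (d : ℕ) : SymmSet where
  obj k := {x : X.obj k // ∃ (i : ℕ) (_ : i ≤ d) (α : k.unop ⟶ Ups.of i)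
      (y : simp X i), x = X.map α.op y}
  map f := TypeCat.ofHom (fun x => ⟨X.map f x.1, by
    obtain ⟨i, hi, α, y, hy⟩ := x.2
    refine ⟨i, hi, f.unop ≫ α, y, ?_⟩
    rw [hy, ← FunctorToTypes.map_comp_apply]
    rfl⟩)
  map_id := by
    intro k; refine ConcreteCategory.hom_ext _ _ fun x => ?_
    exact Subtype.ext (by simp)
  map_comp := by
    intro k k' k'' f g; refine ConcreteCategory.hom_ext _ _ fun x => ?_
    exact Subtype.ext (by simp)

/-- A symmetric set is `d`-skeletal when all simplices above dimension `d`
are degenerate. -/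
def SkeletalLE (X : SymmSet) (d : ℕ) : Prop :=
  ∀ n, d < n → ∀ x : simp X n, Degen X n x

/-- `X` has dimension `d` when `d` is the least integer such that `X` is
`d`-skeletal. -/
def HasDim (X : SymmSet) (d : ℕ) : Prop :=
  IsLeast {m | SkeletalLE X m} d

/-- A symmetric set is reduced when it has exactly one `0`-simplex. -/
def Reduced (X : SymmSet) : Prop :=
  Nonempty (simp X 0) ∧ Subsingleton (simp X 0)

/-- A partial group is a reduced spiny symmetric set. -/
def IsPartialGroup (X : SymmSet) : Prop := Reduced X ∧ Spiny X

/-- A partial group is trivial when it has no nonidentity elements. -/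
def TrivialPG (X : SymmSet) : Prop := Subsingleton (simp X 1)

/-- The order of a partial group: the number of its elements (edges). -/
noncomputable def orderPG (X : SymmSet) : ℕ := Nat.card (simp X 1)

/-- An edge is an identity if it is in the image of the degeneracy `X₀ → X₁`. -/
def isIdent (X : SymmSet) (e : simp X 1) : Prop :=
  ∃ v : simp X 0, e = X.map (Quiver.Hom.op
    ((fun _ => 0 : Fin 2 → Fin 1) : Ups.of 1 ⟶ Ups.of 0)) v

/-- The source vertex of an edge. -/
def srcE (X : SymmSet) (e : simp X 1) : simp X 0 :=
  X.map (Quiver.Hom.op ((fun _ => 0 : Fin 1 → Fin 2) : Ups.of 0 ⟶ Ups.of 1)) e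

/-- `X` has (higher Segal) degree at most `k`: for each starry word `w` of
length `n+1 ≥ k+1`, if the last `k+1` faces `d_{n+1-k} w, …, d_{n+1} w` of `w`
are Bousfield–Segal images of simplices, then so is `w`. -/
def HasDegLE (X : SymmSet) (k : ℕ) : Prop :=
  ∀ n, k ≤ n → ∀ w : Fin (n + 1) → simp X 1,
    (∀ a b, srcE X (w a) = srcE X (w b)) →
    (∀ i : Fin (n + 1), n ≤ (i : ℕ) + k →
      (fun j : Fin n => w (i.succAbove j)) ∈ Set.range (BS X n)) →
    w ∈ Set.range (BS X (n + 1))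

/-- `X` has degree `d`: `d` is the least `k ≥ 1` with `HasDegLE X k`. -/
def DegreeIs (X : SymmSet) (d : ℕ) : Prop :=
  IsLeast {k | 1 ≤ k ∧ HasDegLE X k} d

/-- `W`, with structure maps `i, j`, is a coproduct of `Y` and `Z` in the
category of partial groups. -/
def IsPGCoproduct (W Y Z : SymmSet) (i : Y ⟶ W) (j : Z ⟶ W) : Prop :=
  ∀ V : SymmSet, IsPartialGroup V → ∀ (f : Y ⟶ V) (g : Z ⟶ V),
    ∃! h : W ⟶ V, i ≫ h = f ∧ j ≫ h = g

/-- The nerve of a group `G`, as a symmetric set: an `n`-simplex is a matrix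
`(g_{ij})` of elements of `G` satisfying the cocycle condition. -/
def grpNerve (G : Type) [Group G] : SymmSet where
  obj k := {M : Fin (k.unop.toNat + 1) → Fin (k.unop.toNat + 1) → G //
      ∀ i j l, M i j * M j l = M i l}
  map f := TypeCat.ofHom (fun M => ⟨fun a b => M.1 (f.unop a) (f.unop b),
    fun i j l => M.2 (f.unop i) (f.unop j) (f.unop l)⟩)
  map_id := by intro k; refine ConcreteCategory.hom_ext _ _ fun M => ?_; exact Subtype.ext rfl
  map_comp := by intros; refine ConcreteCategory.hom_ext _ _ fun M => ?_; exact Subtype.ext rfl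

section Aux

/-- The constant map `[0] → [n]` at `i`. -/
def constU (n : ℕ) (i : Fin (n + 1)) : Ups.of 0 ⟶ Ups.of n := fun _ => i

/-- The unique map `[1] → [0]`. -/
def cU : Ups.of 1 ⟶ Ups.of 0 := fun _ => 0

/-- The map `[0] → [1]` hitting `0`. -/
def sU : Ups.of 0 ⟶ Ups.of 1 := fun _ => 0

lemma eps_comp {n m : ℕ} (i j : Fin (n + 1)) (ρ : Ups.of n ⟶ Ups.of m) :
    eps n i j ≫ ρ = eps m (ρ i) (ρ j) := by
  funext a
  show ρ (eps n i j a) = (if a = 0 then ρ i else ρ j)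
  simp only [eps]
  split_ifs with h <;> simp [h]

lemma BS_map (X : SymmSet) {n m : ℕ} (ρ : Ups.of n ⟶ Ups.of m) (y : simp X m) (k : Fin n) :
    BS X n (X.map ρ.op y) k = X.map (eps m (ρ 0) (ρ k.succ)).op y := by
  show X.map (eps n 0 k.succ).op (X.map ρ.op y) = _
  rw [← FunctorToTypes.map_comp_apply, ← op_comp, eps_comp]
  rfl

lemma eps_diag_factor {n : ℕ} (i : Fin (n + 1)) :
    eps n i i = cU ≫ constU n i := by
  funext a
  show (if a = 0 then i else i) = i
  split_ifs <;> rfl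

lemma ident_diag (X : SymmSet) (n : ℕ) (i : Fin (n + 1)) (x : simp X n) :
    isIdent X (X.map (eps n i i).op x) := by
  refine ⟨X.map (constU n i).op x, ?_⟩
  show _ = X.map cU.op _
  rw [eps_diag_factor, op_comp, FunctorToTypes.map_comp_apply]

lemma src_of_ident (X : SymmSet) (w : simp X 0) :
    X.map sU.op (X.map cU.op w) = w := by
  rw [← FunctorToTypes.map_comp_apply, ← op_comp]
  have hsc : sU ≫ cU = 𝟙 (Ups.of 0) := by
    funext a
    show (0 : Fin 1) = a
    exact (Fin.fin_one_eq_zero a).symm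
  rw [hsc]
  exact FunctorToTypes.map_id_apply X w

lemma eps_zero_eq_of_ident (X : SymmSet) (n : ℕ) (x : simp X n) (k : Fin n)
    (h : isIdent X (BS X n x k)) :
    X.map (eps n 0 0).op x = BS X n x k := by
  obtain ⟨v, hv⟩ := h
  have hv : BS X n x k = X.map cU.op v := hv
  have h2 : X.map sU.op (BS X n x k) = X.map (constU n 0).op x := by
    show X.map sU.op (X.map (eps n 0 k.succ).op x) = _
    rw [← FunctorToTypes.map_comp_apply, ← op_comp]
    congr 1
  have hv' : v = X.map (constU n 0).op x := by
    calc v = X.map sU.op (X.map cU.op v) := (src_of_ident X v).symm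
    _ = X.map sU.op (BS X n x k) := by rw [← hv]
    _ = X.map (constU n 0).op x := h2
  rw [eps_diag_factor 0, op_comp, FunctorToTypes.map_comp_apply, ← hv', ← hv]

lemma degen_of_collapse (X : SymmSet) (m : ℕ) (x : simp X (m + 1))
    (t r : Fin (m + 2)) (hrt : r ≠ t)
    (hfix : X.map (Quiver.Hom.op (X := Ups.of (m + 1)) (Y := Ups.of (m + 1))
      ((fun a => if a = t then r else a : Fin (m + 2) → Fin (m + 2)) :
        Ups.of (m + 1) ⟶ Ups.of (m + 1))) x = x) :
    Degen X (m + 1) x := by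
  set τ : Ups.of (m + 1) ⟶ Ups.of (m + 1) :=
    (fun a => if a = t then r else a : Fin (m + 2) → Fin (m + 2)) with hτdef
  set σ : Ups.of m ⟶ Ups.of (m + 1) := (t.succAbove : Fin (m + 1) → Fin (m + 2)) with hσ
  have hτ : ∀ a : Fin (m + 2), τ a ≠ t := by
    intro a
    show (if a = t then r else a) ≠ t
    split_ifs with h
    · exact hrt
    · exact h
  choose ρ hρ using fun a => Fin.exists_succAbove_eq (hτ a)
  refine ⟨m, (ρ : Ups.of (m + 1) ⟶ Ups.of m), ?_, ?_,
    X.map (Quiver.Hom.op σ) x, ?_⟩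
  · intro c
    refine ⟨t.succAbove c, ?_⟩
    have h1 : τ (t.succAbove c) = t.succAbove c := if_neg (Fin.succAbove_ne t c)
    apply Fin.succAbove_right_injective (p := t)
    exact (hρ (t.succAbove c)).trans h1
  · intro hb
    have h2 := Fintype.card_le_of_injective ρ hb.1
    have h3 : m + 2 ≤ (Ups.of (m + 1)).toNat := by simpa using h2
    have h4 : (Ups.of (m + 1)).toNat = m + 1 := rfl
    omega
  · have hcomp : (ρ ≫ σ : Ups.of (m + 1) ⟶ Ups.of (m + 1)) = τ := by
      funext a
      exact hρ a
    calc x = X.map (Quiver.Hom.op τ) x := hfix.symm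
    _ = X.map (Quiver.Hom.op (CategoryStruct.comp (X := Ups.of (m + 1)) (Y := Ups.of m)
        (Z := Ups.of (m + 1)) ρ σ)) x :=
        congrArg (fun f : Ups.of (m + 1) ⟶ Ups.of (m + 1) => X.map f.op x) hcomp.symm
    _ = X.map (Quiver.Hom.op (X := Ups.of (m + 1)) (Y := Ups.of m) ρ) (X.map (Quiver.Hom.op σ) x) :=
        FunctorToTypes.map_comp_apply X (Quiver.Hom.op σ)
          (Quiver.Hom.op (X := Ups.of (m + 1)) (Y := Ups.of m) ρ) x

end Aux

/-- In a spiny symmetric set, an `n`-simplex is nondegenerate if and only if its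
Bousfield–Segal image `(ε₀₁*x, …, ε₀ₙ*x)` consists of `n` distinct elements of
`X₁`, none of which is an identity. -/
theorem nondegenerate_iff_bousfieldSegal_distinct_nonidentity
    (X : SymmSet) (hX : Spiny X) (n : ℕ) (x : simp X n) :
    ¬ Degen X n x ↔
      (Function.Injective (fun k : Fin n => BS X n x k) ∧
        ∀ k : Fin n, ¬ isIdent X (BS X n x k)) := by
  have hfwd : Degen X n x → ¬ (Function.Injective (fun k : Fin n => BS X n x k) ∧
      ∀ k : Fin n, ¬ isIdent X (BS X n x k)) := by
    rintro ⟨m, ρ, hs, hb, y, hy⟩ ⟨hinj, hni⟩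
    have hnotinj : ¬ Function.Injective ρ := fun hi => hb ⟨hi, hs⟩
    rw [Function.not_injective_iff] at hnotinj
    obtain ⟨a, b, hab, hne⟩ := hnotinj
    subst hy
    rcases Fin.eq_zero_or_eq_succ (n := n) a with rfl | ⟨k, rfl⟩ <;>
      rcases Fin.eq_zero_or_eq_succ (n := n) b with rfl | ⟨l, rfl⟩
    · exact hne rfl
    · refine hni l ?_
      rw [BS_map, ← hab]
      exact ident_diag X m (ρ 0) y
    · refine hni k ?_
      rw [BS_map, hab]
      exact ident_diag X m (ρ 0) y
    · have hkl : k ≠ l := fun h => hne (by rw [h])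
      refine hkl (hinj ?_)
      show BS X n (X.map ρ.op y) k = BS X n (X.map ρ.op y) l
      rw [BS_map, BS_map, hab]
  have hbwd : ¬ (Function.Injective (fun k : Fin n => BS X n x k) ∧
      ∀ k : Fin n, ¬ isIdent X (BS X n x k)) → Degen X n x := by
    intro h
    rcases not_and_or.mp h with h | h
    · rw [Function.not_injective_iff] at h
      obtain ⟨k, l, hkl, hne⟩ := h
      obtain ⟨m, rfl⟩ : ∃ m, n = m + 1 := ⟨n - 1, by have := k.pos; omega⟩
      refine degen_of_collapse X m x l.succ k.succ
        (fun hh => hne (Fin.succ_injective _ hh)) ?_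
      apply hX (m + 1)
      funext j
      refine (BS_map X _ x j).trans ?_
      erw [if_neg (fun hh : (0 : Fin (m + 2)) = l.succ => Fin.succ_ne_zero l hh.symm)]
      by_cases hj : j = l
      · rw [if_pos (show j.succ = l.succ by rw [hj])]
        show BS X (m + 1) x k = BS X (m + 1) x j
        rw [hj]
        exact hkl
      · rw [if_neg (fun hh => hj (Fin.succ_injective _ hh))]
        rfl
    · rw [not_forall] at h
      obtain ⟨k, hk⟩ := h
      rw [not_not] at hk
      obtain ⟨m, rfl⟩ : ∃ m, n = m + 1 := ⟨n - 1, by have := k.pos; omega⟩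
      refine degen_of_collapse X m x k.succ 0
        (fun hh => Fin.succ_ne_zero k hh.symm) ?_
      apply hX (m + 1)
      funext j
      refine (BS_map X _ x j).trans ?_
      erw [if_neg (fun hh : (0 : Fin (m + 2)) = k.succ => Fin.succ_ne_zero k hh.symm)]
      by_cases hj : j = k
      · rw [if_pos (show j.succ = k.succ by rw [hj])]
        rw [hj]
        exact eps_zero_eq_of_ident X (m + 1) x k hk
      · rw [if_neg (fun hh => hj (Fin.succ_injective _ hh))]
        rfl
  constructor
  · intro hnd
    by_contra h
    exact hnd (hbwd h)
  · intro h hd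
    exact hfwd hd h
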